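/- B is invertible and B⁻¹ = M; equivalently, B·M equals the (p+3)×(p+3) identity matrix. -/

import Mathlib

/-- The Neumann–Zagier matrix `𝐁` (w.r.t. the preferred longitude) of the ideal
triangulation `X_n` of a hyperbolic twist knot complement for odd `n`
(rows/columns `1, …, p+3` of the paper are indexed here by `0, …, p+2`). -/
def Bodd (p : ℕ) : Matrix (Fin (p + 3)) (Fin (p + 3)) ℚ :=
  Matrix.of fun i j =>
    if i.1 = 0 then (if j.1 = p + 2 then -1 else 0)
    else if i.1 = 1 then (if j.1 = 0 then -1 else if j.1 = p + 2 then 1 else 0)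
    else if i.1 ≤ p then
      (if j.1 + 3 = i.1 then -1
       else if j.1 + 2 = i.1 then 2
       else if j.1 + 1 = i.1 then -1 else 0)
    else if i.1 = p + 1 then
      (if j.1 + 1 = p then -1 else if j.1 = p then 1 else if j.1 = p + 1 then 1 else 0)
    else (if j.1 = p + 1 then 2 else if j.1 = p + 2 then 2 else 0)

/-- The claimed inverse `M = 𝐁⁻¹` for odd `n`. -/
def Modd (p : ℕ) : Matrix (Fin (p + 3)) (Fin (p + 3)) ℚ :=
  Matrix.of fun i j =>
    if i.1 < p then
      (if j.1 ≤ 1 then -((i.1 : ℚ) + 1)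
       else if 2 ≤ j.1 ∧ j.1 ≤ i.1 + 1 then -((i.1 : ℚ) + 2 - (j.1 : ℚ))
       else 0)
    else if i.1 = p then
      (if j.1 = 0 then -((p : ℚ) + 1)
       else if j.1 = 1 then -(p : ℚ)
       else if 2 ≤ j.1 ∧ j.1 ≤ p then -((p : ℚ) + 1 - (j.1 : ℚ))
       else if j.1 = p + 1 then 1
       else if j.1 = p + 2 then -1/2
       else 0)
    else if i.1 = p + 1 then
      (if j.1 = 0 then 1 else if j.1 = p + 2 then 1/2 else 0)
    else (if j.1 = 0 then -1 else 0)

/-- Scalar version of `Bodd` on natural-number indices. -/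
def bf (p i j : ℕ) : ℚ :=
  if i = 0 then (if j = p + 2 then -1 else 0)
  else if i = 1 then (if j = 0 then -1 else if j = p + 2 then 1 else 0)
  else if i ≤ p then
    (if j + 3 = i then -1
     else if j + 2 = i then 2
     else if j + 1 = i then -1 else 0)
  else if i = p + 1 then
    (if j + 1 = p then -1 else if j = p then 1 else if j = p + 1 then 1 else 0)
  else (if j = p + 1 then 2 else if j = p + 2 then 2 else 0)

/-- Scalar version of `Modd` on natural-number indices. -/
def mf (p i j : ℕ) : ℚ :=
  if i < p then
    (if j ≤ 1 then -((i : ℚ) + 1)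
     else if 2 ≤ j ∧ j ≤ i + 1 then -((i : ℚ) + 2 - (j : ℚ))
     else 0)
  else if i = p then
    (if j = 0 then -((p : ℚ) + 1)
     else if j = 1 then -(p : ℚ)
     else if 2 ≤ j ∧ j ≤ p then -((p : ℚ) + 1 - (j : ℚ))
     else if j = p + 1 then 1
     else if j = p + 2 then -1/2
     else 0)
  else if i = p + 1 then
    (if j = 0 then 1 else if j = p + 2 then 1/2 else 0)
  else (if j = 0 then -1 else 0)

lemma sum_one {n a : ℕ} {f : ℕ → ℚ} (ha : a < n)
    (h0 : ∀ k, k < n → k ≠ a → f k = 0) :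
    ∑ k ∈ Finset.range n, f k = f a :=
  Finset.sum_eq_single_of_mem a (Finset.mem_range.2 ha)
    (fun k hk hne => h0 k (Finset.mem_range.1 hk) hne)

lemma sum_two {n a b : ℕ} {f : ℕ → ℚ} (ha : a < n) (hb : b < n) (hab : a ≠ b)
    (h0 : ∀ k, k < n → k ≠ a → k ≠ b → f k = 0) :
    ∑ k ∈ Finset.range n, f k = f a + f b := by
  rw [← Finset.sum_subset (show ({a, b} : Finset ℕ) ⊆ Finset.range n by
        intro x hx
        simp only [Finset.mem_insert, Finset.mem_singleton] at hx
        rcases hx with rfl | rfl <;> simpa)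
      (by intro x hx hxs
          simp only [Finset.mem_insert, Finset.mem_singleton, not_or] at hxs
          exact h0 x (Finset.mem_range.1 hx) hxs.1 hxs.2)]
  rw [Finset.sum_insert (by simp [hab]), Finset.sum_singleton]

lemma sum_three {n a b c : ℕ} {f : ℕ → ℚ} (ha : a < n) (hb : b < n) (hc : c < n)
    (hab : a ≠ b) (hac : a ≠ c) (hbc : b ≠ c)
    (h0 : ∀ k, k < n → k ≠ a → k ≠ b → k ≠ c → f k = 0) :
    ∑ k ∈ Finset.range n, f k = f a + f b + f c := by
  rw [← Finset.sum_subset (show ({a, b, c} : Finset ℕ) ⊆ Finset.range n by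
        intro x hx
        simp only [Finset.mem_insert, Finset.mem_singleton] at hx
        rcases hx with rfl | rfl | rfl <;> simpa)
      (by intro x hx hxs
          simp only [Finset.mem_insert, Finset.mem_singleton, not_or] at hxs
          exact h0 x (Finset.mem_range.1 hx) hxs.1 hxs.2.1 hxs.2.2)]
  rw [Finset.sum_insert (by simp [hab, hac]), Finset.sum_insert (by simp [hbc]),
    Finset.sum_singleton, add_assoc]

lemma key (p : ℕ) (hp : 2 ≤ p) (i j : ℕ) (hi : i < p + 3) (hj : j < p + 3) :
    ∑ k ∈ Finset.range (p + 3), bf p i k * mf p k j = if i = j then (1 : ℚ) else 0 := by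
  by_cases hi0 : i = 0
  · subst hi0
    rw [sum_one (a := p + 2) (by omega)
      (by intro k hk hne; have : bf p 0 k = 0 := by simp [bf, hne]
          rw [this, zero_mul])]
    simp only [bf, mf, if_pos rfl, show ¬ (p + 2 < p) by omega,
      show p + 2 ≠ p by omega, show p + 2 ≠ p + 1 by omega, if_neg, if_false]
    by_cases hj0 : j = 0 <;> simp [hj0, eq_comm]
  by_cases hi1 : i = 1
  · subst hi1
    rw [sum_two (a := 0) (b := p + 2) (by omega) (by omega) (by omega)
      (by intro k hk h1 h2; have : bf p 1 k = 0 := by simp [bf, h1, h2]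
          rw [this, zero_mul])]
    simp only [bf, mf, show (1 : ℕ) ≠ 0 by omega, if_pos rfl, if_neg, if_false,
      show (0 : ℕ) < p by omega, show ¬ (p + 2 < p) by omega,
      show p + 2 ≠ p by omega, show p + 2 ≠ p + 1 by omega, show p + 2 ≠ 0 by omega]
    rcases Nat.lt_or_ge j 2 with hj2 | hj2
    · rcases (by omega : j = 0 ∨ j = 1) with rfl | rfl <;> norm_num
    · have h1 : ¬ (j ≤ 1) := by omega
      have h2 : ¬ (1 = j) := by omega
      have h3 : j ≠ 0 := by omega
      simp [h1, h2, h3]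
  by_cases hi2 : i = 2
  · subst hi2
    rw [sum_two (a := 0) (b := 1) (by omega) (by omega) (by omega)
      (by intro k hk h1 h2
          have : bf p 2 k = 0 := by
            simp only [bf, show (2:ℕ) ≠ 0 by omega, show (2:ℕ) ≠ 1 by omega,
              if_neg, if_false, if_pos hp]
            have c1 : k + 3 ≠ 2 := by omega
            have c2 : k + 2 ≠ 2 := by omega
            have c3 : k + 1 ≠ 2 := by omega
            simp [c1, c2, c3, h1, h2]
          rw [this, zero_mul])]
    have hb0 : bf p 2 0 = 2 := by
      simp [bf, show (2:ℕ) ≠ 0 by omega, show (2:ℕ) ≠ 1 by omega, hp]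
    have hb1 : bf p 2 1 = -1 := by
      simp [bf, show (2:ℕ) ≠ 0 by omega, show (2:ℕ) ≠ 1 by omega, hp]
    rw [hb0, hb1]
    simp only [mf, show (0:ℕ) < p by omega, show (1:ℕ) < p by omega, if_pos]
    rcases Nat.lt_or_ge j 2 with hj2 | hj2
    · have h1 : j ≤ 1 := by omega
      have h2 : (2:ℕ) ≠ j := by omega
      simp [h1, h2]; norm_num
    · have h1 : ¬ (j ≤ 1) := by omega
      by_cases hq : j = 2
      · subst hq; norm_num
      · have h2 : ¬ (j ≤ 1 + 1) := by omega
        have h3 : (2:ℕ) ≠ j := by omega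
        simp [h1, h2, h3, hj2]
  by_cases hi3 : i ≤ p
  · -- 3 ≤ i ≤ p
    obtain ⟨r, rfl⟩ : ∃ r, i = r + 3 := ⟨i - 3, by omega⟩
    rw [sum_three (a := r) (b := r + 1) (c := r + 2) (by omega) (by omega) (by omega)
      (by omega) (by omega) (by omega)
      (by intro k hk h1 h2 h3
          have : bf p (r + 3) k = 0 := by
            simp only [bf, show r + 3 ≠ 0 by omega, show r + 3 ≠ 1 by omega,
              if_neg, if_false, if_pos hi3]
            have c1 : k + 3 ≠ r + 3 := by omega
            have c2 : k + 2 ≠ r + 3 := by omega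
            have c3 : k + 1 ≠ r + 3 := by omega
            simp [c1, c2, c3, h1, h2, h3]
          rw [this, zero_mul])]
    have hb1 : bf p (r + 3) r = -1 := by
      simp [bf, show r + 3 ≠ 0 by omega, show r + 3 ≠ 1 by omega, hi3]
    have hb2 : bf p (r + 3) (r + 1) = 2 := by
      simp [bf, show r + 3 ≠ 0 by omega, show r + 3 ≠ 1 by omega, hi3,
        show r + 1 + 3 ≠ r + 3 by omega]
    have hb3 : bf p (r + 3) (r + 2) = -1 := by
      simp [bf, show r + 3 ≠ 0 by omega, show r + 3 ≠ 1 by omega, hi3,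
        show r + 2 + 3 ≠ r + 3 by omega, show r + 2 + 2 ≠ r + 3 by omega]
    rw [hb1, hb2, hb3]
    simp only [mf, show r < p by omega, show r + 1 < p by omega,
      show r + 2 < p by omega, if_pos]
    rcases Nat.lt_or_ge j 2 with hj2 | hj2
    · have h1 : j ≤ 1 := by omega
      have h2 : r + 3 ≠ j := by omega
      simp [h1, h2]; push_cast; ring
    · have h1 : ¬ (j ≤ 1) := by omega
      by_cases hA : j ≤ r + 1
      · have h2 : r + 3 ≠ j := by omega
        simp [h1, hj2, hA, show j ≤ r + 1 + 1 by omega, show j ≤ r + 2 + 1 by omega, h2]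
        push_cast; ring
      · by_cases hB : j = r + 2
        · subst hB
          have h2 : r + 3 ≠ r + 2 := by omega
          simp [h1, hj2, hA, show r + 2 ≤ r + 1 + 1 by omega,
            show r + 2 ≤ r + 2 + 1 by omega, h2]
        · by_cases hC : j = r + 3
          · subst hC
            simp [h1, hj2, hA, show ¬ (r + 3 ≤ r + 1 + 1) by omega,
              show r + 3 ≤ r + 2 + 1 by omega]
            push_cast; ring
          · have h2 : r + 3 ≠ j := by omega
            simp [h1, hj2, hA, show ¬ (j ≤ r + 1 + 1) by omega,
              show ¬ (j ≤ r + 2 + 1) by omega, h2]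
  by_cases hi4 : i = p + 1
  · subst hi4
    obtain ⟨q, rfl⟩ : ∃ q, p = q + 2 := ⟨p - 2, by omega⟩
    rw [sum_three (a := q + 1) (b := q + 2) (c := q + 3) (by omega) (by omega) (by omega)
      (by omega) (by omega) (by omega)
      (by intro k hk h1 h2 h3
          have : bf (q + 2) (q + 3) k = 0 := by
            simp only [bf, show q + 3 ≠ 0 by omega, show q + 3 ≠ 1 by omega,
              show ¬ (q + 3 ≤ q + 2) by omega, if_neg, if_false, if_pos rfl]
            have c1 : k + 1 ≠ q + 2 := by omega
            have c2 : k ≠ q + 2 := h2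
            have c3 : k ≠ q + 3 := h3
            simp [c1, c2, c3, h1]
          rw [this, zero_mul])]
    have hb1 : bf (q + 2) (q + 3) (q + 1) = -1 := by
      simp [bf, show q + 3 ≠ 0 by omega, show q + 3 ≠ 1 by omega,
        show ¬ (q + 3 ≤ q + 2) by omega]
    have hb2 : bf (q + 2) (q + 3) (q + 2) = 1 := by
      simp [bf, show q + 3 ≠ 0 by omega, show q + 3 ≠ 1 by omega,
        show ¬ (q + 3 ≤ q + 2) by omega, show q + 2 + 1 ≠ q + 2 by omega]
    have hb3 : bf (q + 2) (q + 3) (q + 3) = 1 := by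
      simp [bf, show q + 3 ≠ 0 by omega, show q + 3 ≠ 1 by omega,
        show ¬ (q + 3 ≤ q + 2) by omega, show q + 3 + 1 ≠ q + 2 by omega,
        show q + 3 ≠ q + 2 by omega]
    rw [hb1, hb2, hb3]
    simp only [mf, show q + 1 < q + 2 by omega, show ¬ (q + 2 < q + 2) by omega,
      show ¬ (q + 3 < q + 2) by omega, show q + 3 ≠ q + 2 by omega,
      if_pos, if_neg, if_false, if_true, eq_self_iff_true]
    rcases Nat.lt_or_ge j 2 with hj2 | hj2
    · rcases (by omega : j = 0 ∨ j = 1) with rfl | rfl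
      · simp [show q + 3 ≠ 0 by omega]; push_cast; ring
      · simp [show q + 3 ≠ 1 by omega, show (1:ℕ) ≠ 0 by omega,
          show ¬ (1 = q + 2 + 1) by omega, show ¬ (1 = q + 2 + 2) by omega]
        push_cast; ring
    · have h1 : ¬ (j ≤ 1) := by omega
      have h2 : j ≠ 0 := by omega
      have h3 : j ≠ 1 := by omega
      by_cases hA : j ≤ q + 2
      · simp [h1, h2, h3, hj2, hA, show j ≤ q + 1 + 1 by omega,
          show q + 3 ≠ j by omega, show j ≠ q + 2 + 1 by omega,
          show j ≠ q + 2 + 2 by omega]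
        push_cast; ring
      · by_cases hB : j = q + 3
        · subst hB
          simp [h1, h2, h3, hj2, show ¬ (q + 3 ≤ q + 1 + 1) by omega,
            show ¬ (q + 3 ≤ q + 2) by omega, show q + 3 ≠ q + 2 + 2 by omega]
        · by_cases hC : j = q + 4
          · subst hC
            simp [h1, h2, h3, hj2, show ¬ (q + 4 ≤ q + 1 + 1) by omega,
              show ¬ (q + 4 ≤ q + 2) by omega, show q + 4 ≠ q + 2 + 1 by omega,
              show q + 3 ≠ q + 4 by omega]
            norm_num
          · simp [h1, h2, h3, hj2, show ¬ (j ≤ q + 1 + 1) by omega,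
              show ¬ (j ≤ q + 2) by omega, show j ≠ q + 2 + 1 by omega,
              show j ≠ q + 2 + 2 by omega, show q + 3 ≠ j by omega]
  · -- i = p + 2
    have hi5 : i = p + 2 := by omega
    subst hi5
    rw [sum_two (a := p + 1) (b := p + 2) (by omega) (by omega) (by omega)
      (by intro k hk h1 h2
          have : bf p (p + 2) k = 0 := by
            simp only [bf, show p + 2 ≠ 0 by omega, show p + 2 ≠ 1 by omega,
              show ¬ (p + 2 ≤ p) by omega, show p + 2 ≠ p + 1 by omega,
              if_neg, if_false]
            simp [h1, h2]
          rw [this, zero_mul])]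
    have hb1 : bf p (p + 2) (p + 1) = 2 := by
      simp [bf, show p + 2 ≠ 0 by omega, show p + 2 ≠ 1 by omega,
        show ¬ (p + 2 ≤ p) by omega, show p + 2 ≠ p + 1 by omega]
    have hb2 : bf p (p + 2) (p + 2) = 2 := by
      simp [bf, show p + 2 ≠ 0 by omega, show p + 2 ≠ 1 by omega,
        show ¬ (p + 2 ≤ p) by omega, show p + 2 ≠ p + 1 by omega]
    rw [hb1, hb2]
    simp only [mf, show ¬ (p + 1 < p) by omega, show ¬ (p + 2 < p) by omega,
      show p + 1 ≠ p by omega, show p + 2 ≠ p by omega,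
      show p + 2 ≠ p + 1 by omega, if_pos rfl, if_neg, if_false]
    by_cases hj0 : j = 0
    · subst hj0
      simp [show p + 2 ≠ 0 by omega]
    · by_cases hj1 : j = p + 2
      · subst hj1
        simp [show p + 2 ≠ 0 by omega]
      · simp [hj0, hj1, show p + 2 ≠ j by omega]

theorem stmt_13 (p : ℕ) (hp : 2 ≤ p) : Bodd p * Modd p = 1 := by
  ext i j
  rw [Matrix.mul_apply, Matrix.one_apply]
  have h : ∑ k : Fin (p + 3), Bodd p i k * Modd p k j
      = ∑ k ∈ Finset.range (p + 3), bf p i.1 k * mf p k j.1 :=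
    Fin.sum_univ_eq_sum_range (fun k => bf p i.1 k * mf p k j.1) (p + 3)
  rw [h, key p hp i.1 j.1 i.2 j.2]
  simp [Fin.ext_iff]
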